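/- For every p ∈ ℕ^n, the mountain pass level satisfies d_0^p > c_0^p. -/

import Mathlib

open Filter Topology

namespace FK

noncomputable section

abbrev Zn (n : ℕ) := Fin n → ℤ

variable {n : ℕ}

/-- the ℓ¹ norm `‖i‖ = ∑ |i_j|` on `ℤⁿ` -/
def znorm (i : Zn n) : ℕ := ∑ j, (i j).natAbs

/-- the finite ball `{j : ‖j - i‖ ≤ r}` as a `Finset` -/
def ball (r : ℕ) (i : Zn n) : Finset (Zn n) :=
  (Finset.Icc (fun m => i m - (r : ℤ)) (fun m => i m + (r : ℤ))).filter fun j => znorm (j - i) ≤ r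

/-- the shift `(shift j u) i = u (i + j)`, i.e. `τ_{-jₙ}ⁿ ⋯ τ_{-j₁}¹ u` -/
def shift (j : Zn n) (u : Zn n → ℝ) : Zn n → ℝ := fun i => u (i + j)

/-- the local potential `S_j(u) = s(τ_{-j} u)` -/
def Spot (s : (Zn n → ℝ) → ℝ) (j : Zn n) (u : Zn n → ℝ) : ℝ := s (shift j u)

/-- partial derivative `∂_i F(u)` of a functional `F` with respect to the coordinate `u(i)` -/
def pd (F : (Zn n → ℝ) → ℝ) (i : Zn n) (u : Zn n → ℝ) : ℝ :=
  deriv (fun t => F (Function.update u i t)) (u i)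

/-- second partial derivative `∂_{i,k} F(u)` -/
def pd2 (F : (Zn n → ℝ) → ℝ) (i k : Zn n) (u : Zn n → ℝ) : ℝ :=
  pd (fun w => pd F k w) i u

/-- the gradient field `W(u)(i) = ∑_{j : ‖j-i‖ ≤ r} ∂_i S_j(u)` -/
def grad (r : ℕ) (s : (Zn n → ℝ) → ℝ) (u : Zn n → ℝ) : Zn n → ℝ :=
  fun i => ∑ j ∈ ball r i, pd (Spot s j) i u

/-- `u` is a solution of the Euler–Lagrange equation (EL):
`∑_{j : ‖j-i‖ ≤ r} ∂_i S_j(u) = 0` for all `i` -/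
def IsSolution (r : ℕ) (s : (Zn n → ℝ) → ℝ) (u : Zn n → ℝ) : Prop :=
  ∀ i, grad r s u i = 0

/-- the standard basis vector `e_m` -/
def unitv (m : Fin n) : Zn n := fun m' => if m' = m then 1 else 0

/-- the first standard basis vector `e₁` -/
def e1v : Zn n := fun m => if (m : ℕ) = 0 then 1 else 0

/-- `u` has period `p m` in the `m`-th coordinate direction, for every `m` -/
def Periodic (p : Fin n → ℕ) (u : Zn n → ℝ) : Prop :=
  ∀ (i : Zn n) (m : Fin n), u (i + (p m : ℤ) • unitv m) = u i

/-- `u` is `1`-periodic in every coordinate direction -/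
def PeriodicAll (u : Zn n → ℝ) : Prop := Periodic (fun _ => 1) u

/-- `J_0(u) = S_0(u)` -/
def J0 (s : (Zn n → ℝ) → ℝ) (u : Zn n → ℝ) : ℝ := Spot s 0 u

/-- `c_0 = inf J_0` over fully periodic configurations -/
def c0 (s : (Zn n → ℝ) → ℝ) : ℝ := sInf {y | ∃ u, PeriodicAll u ∧ J0 s u = y}

/-- `M_0`, the set of fully periodic minimizers of `J_0` -/
def M0 (s : (Zn n → ℝ) → ℝ) : Set (Zn n → ℝ) := {u | PeriodicAll u ∧ J0 s u = c0 s}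

/-- the fundamental domain `T_0^p = ∏_j {0, …, p_j - 1}` -/
def Tbox (p : Fin n → ℕ) : Finset (Zn n) :=
  Finset.Icc 0 fun m => (p m : ℤ) - 1

/-- `J_0^p(u) = ∑_{j ∈ T_0^p} S_j(u)` -/
def J0p (s : (Zn n → ℝ) → ℝ) (p : Fin n → ℕ) (u : Zn n → ℝ) : ℝ :=
  ∑ j ∈ Tbox p, Spot s j u

/-- `c_0^p = inf J_0^p` over `Λ_0^p` -/
def c0p (s : (Zn n → ℝ) → ℝ) (p : Fin n → ℕ) : ℝ :=
  sInf {y | ∃ u, Periodic p u ∧ J0p s p u = y}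

/-- `I_0^p(u) = J_0^p(u + v_0)` -/
def I0p (s : (Zn n → ℝ) → ℝ) (p : Fin n → ℕ) (v0 u : Zn n → ℝ) : ℝ :=
  J0p s p (u + v0)

/-- the norm `‖u‖_{Λ_0^p} = (∑_{j ∈ T_0^p} |u(j)|²)^{1/2}` -/
def lamNorm (p : Fin n → ℕ) (u : Zn n → ℝ) : ℝ :=
  Real.sqrt (∑ j ∈ Tbox p, (u j) ^ 2)

/-- `G_0^p = {u ∈ Λ_0^p : 0 ≤ u ≤ w_0 - v_0}` -/
def G0 (p : Fin n → ℕ) (v0 w0 : Zn n → ℝ) : Set (Zn n → ℝ) :=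
  {u | Periodic p u ∧ 0 ≤ u ∧ u ≤ w0 - v0}

/-- the isometric identification of `Λ_0^p` with the euclidean space `ℝ^{T_0^p}` -/
def toEuc (p : Fin n → ℕ) (u : Zn n → ℝ) : EuclideanSpace ℝ (Tbox (n := n) p) :=
  WithLp.toLp 2 fun j => u j.1

/-- inverse of `toEuc`: extend values on `T_0^p` `p`-periodically -/
def extendP (p : Fin n → ℕ) (x : EuclideanSpace ℝ (Tbox (n := n) p)) : Zn n → ℝ :=
  fun i => if h : (fun m => i m % (p m : ℤ)) ∈ Tbox p then x ⟨_, h⟩ else 0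

/-- `I_0^p` read through the identification of `Λ_0^p` with euclidean space -/
def I0euc (s : (Zn n → ℝ) → ℝ) (p : Fin n → ℕ) (v0 : Zn n → ℝ) :
    EuclideanSpace ℝ (Tbox (n := n) p) → ℝ :=
  fun x => I0p s p v0 (extendP p x)

/-- `(I_0^p)'(u) = 0`: vanishing of the Fréchet derivative of `I_0^p` at `u`, computed through
the isometric identification of `Λ_0^p` with euclidean space -/
def IsCrit0 (s : (Zn n → ℝ) → ℝ) (p : Fin n → ℕ) (v0 : Zn n → ℝ) (u : Zn n → ℝ) : Prop :=
  fderiv ℝ (I0euc s p v0) (toEuc p u) = 0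

/-- membership in `H_0^p`: a norm-continuous path in `G_0^p` from `0` to `w_0 - v_0` -/
def PathIn (p : Fin n → ℕ) (v0 w0 : Zn n → ℝ) (h : ℝ → Zn n → ℝ) : Prop :=
  ContinuousOn (fun θ => toEuc p (h θ)) (Set.Icc 0 1) ∧
  (∀ θ ∈ Set.Icc (0 : ℝ) 1, h θ ∈ G0 p v0 w0) ∧
  h 0 = 0 ∧ h 1 = w0 - v0

/-- the mountain pass level `d_0^p = inf_{h ∈ H_0^p} max_{θ ∈ [0,1]} I_0^p(h(θ))` -/
def d0p (s : (Zn n → ℝ) → ℝ) (p : Fin n → ℕ) (v0 w0 : Zn n → ℝ) : ℝ :=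
  sInf {y | ∃ h, PathIn p v0 w0 h ∧
    y = sSup ((fun θ => I0p s p v0 (h θ)) '' Set.Icc 0 1)}

/-- `Φ` is the (negative gradient) semiflow of `I_0^p` on `Λ_0^p`:
`-∂_t Φ_t(u)(i) = ∑_{j : ‖j-i‖ ≤ r} ∂_i S_j(Φ_t(u) + v_0)`, `Φ_0(u) = u` -/
def IsFlow (r : ℕ) (s : (Zn n → ℝ) → ℝ) (p : Fin n → ℕ) (v0 : Zn n → ℝ)
    (Φ : ℝ → (Zn n → ℝ) → (Zn n → ℝ)) : Prop :=
  (∀ u, Periodic p u → ∀ t, Periodic p (Φ t u)) ∧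
  (∀ u, Φ 0 u = u) ∧
  (∀ u, Periodic p u → ∀ i, ∀ t ∈ Set.Ici (0 : ℝ),
    HasDerivWithinAt (fun τ => Φ τ u i) (-(grad r s (Φ t u + v0) i)) (Set.Ici 0) t)

/-- `p(k) = (k, 1, …, 1)` -/
def pk (n k : ℕ) : Fin n → ℕ := fun m => if (m : ℕ) = 0 then k else 1

/-- `u` touches `v` from below -/
def TouchesBelow (u v : Zn n → ℝ) : Prop := u ≤ v ∧ u ≠ v ∧ ∃ i, u i = v i

/-- `θ̲_t = sup {θ ∈ [0,1] : Φ_t(h(θ)) ≤ u₀, Φ_t(h(θ)) ≠ u₀}` -/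
def thetaLow (Φ : ℝ → (Zn n → ℝ) → (Zn n → ℝ)) (h : ℝ → Zn n → ℝ) (u0 : Zn n → ℝ)
    (t : ℝ) : ℝ :=
  sSup {θ | θ ∈ Set.Icc (0 : ℝ) 1 ∧ Φ t (h θ) ≤ u0 ∧ Φ t (h θ) ≠ u0}

/-- `θ̄_t = inf {θ ∈ [0,1] : Φ_t(h(θ)) ≥ u₀, Φ_t(h(θ)) ≠ u₀}` -/
def thetaHigh (Φ : ℝ → (Zn n → ℝ) → (Zn n → ℝ)) (h : ℝ → Zn n → ℝ) (u0 : Zn n → ℝ)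
    (t : ℝ) : ℝ :=
  sInf {θ | θ ∈ Set.Icc (0 : ℝ) 1 ∧ u0 ≤ Φ t (h θ) ∧ Φ t (h θ) ≠ u0}

/-- `s` read through the identification of `ℝ^{B_0^r}` with euclidean space (used to state that
`s ∈ C²(ℝ^{B_0^r}, ℝ)`) -/
def sEuc (r : ℕ) (s : (Zn n → ℝ) → ℝ) : EuclideanSpace ℝ (ball r (0 : Zn n)) → ℝ :=
  fun x => s fun i => if h : i ∈ ball r (0 : Zn n) then x ⟨i, h⟩ else 0

/-- The standing assumptions on the generalized Frenkel–Kontorova model: `s ∈ C²(ℝ^{B_0^r}, ℝ)`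
(encoded by `localized` and `smooth`) satisfying (S1)–(S4). -/
structure Setup (n r : ℕ) : Type where
  /-- the local potential -/
  s : (Zn n → ℝ) → ℝ
  npos : 0 < n
  /-- `s` only depends on the coordinates in `B_0^r` -/
  localized : ∀ u v : Zn n → ℝ, (∀ k, znorm k ≤ r → u k = v k) → s u = s v
  /-- `s` is `C²` -/
  smooth : ContDiff ℝ 2 (sEuc r s)
  /-- (S1): periodicity -/
  S1 : ∀ u : Zn n → ℝ, s (fun i => u i + 1) = s u
  /-- (S2): bounded below -/
  S2_bddBelow : ∃ b : ℝ, ∀ u, b ≤ s u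
  /-- (S2): coercivity -/
  S2_coercive : ∀ k j : Zn n, znorm k ≤ r → znorm j ≤ r → znorm (k - j) = 1 →
    ∀ M : ℝ, ∃ R : ℝ, ∀ u : Zn n → ℝ, R ≤ |u k - u j| → M ≤ s u
  /-- (S3): off-diagonal second partials nonpositive -/
  S3 : ∀ k j : Zn n, znorm k ≤ r → znorm j ≤ r → k ≠ j → ∀ u, pd2 s k j u ≤ 0
  /-- (S3): strict negativity for nearest neighbours of `0` -/
  S3' : ∀ j : Zn n, znorm j = 1 → ∀ u, pd2 s 0 j u < 0
  /-- the constant of (S4) -/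
  C : ℝ
  /-- (S4): uniformly bounded second partials -/
  S4 : ∀ i k : Zn n, znorm i ≤ r → znorm k ≤ r → ∀ u, |pd2 s i k u| ≤ C

/-- 1-periodicity in the directions `e_2, …, e_n` with periods `q` -/
def Periodic1 (q : Fin n → ℕ) (u : Zn n → ℝ) : Prop :=
  ∀ (i : Zn n) (m : Fin n), 1 ≤ (m : ℕ) → u (i + (q m : ℤ) • unitv m) = u i

/-- the slab `{i} × T_1^q` as a `Finset` -/
def slab (q : Fin n → ℕ) (i : ℤ) : Finset (Zn n) :=
  Finset.Icc (fun m => if (m : ℕ) = 0 then i else 0)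
    (fun m => if (m : ℕ) = 0 then i else (q m : ℤ) - 1)

/-- membership in `Λ_1^q` -/
def MemLam1 (q : Fin n → ℕ) (u : Zn n → ℝ) : Prop :=
  Periodic1 q u ∧ Summable fun i : ℤ => ∑ j ∈ slab q i, |u j|

/-- the norm `‖u‖_{Λ_1^q} = ∑_{ℤ × T_1^q} |u(j)| + (∑_{ℤ × T_1^q} |u(j)|²)^{1/2}` -/
def lamNorm1 (q : Fin n → ℕ) (u : Zn n → ℝ) : ℝ :=
  (∑' i : ℤ, ∑ j ∈ slab q i, |u j|) + Real.sqrt (∑' i : ℤ, ∑ j ∈ slab q i, (u j) ^ 2)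

/-- `J_1(u) = liminf_{p → -∞, q → ∞} ∑_{i=p}^q [J_0(τ^1_{-i} u) - c_0]` -/
def J1 (s : (Zn n → ℝ) → ℝ) (u : Zn n → ℝ) : ℝ :=
  liminf (fun pq : ℤ × ℤ => ∑ i ∈ Finset.Icc pq.1 pq.2, (Spot s (i • e1v) u - c0 s))
    (atBot ×ˢ atTop)

/-- the class `Γ_1(v_0, w_0)` of heteroclinic configurations from `v_0` to `w_0` -/
def Gamma1 (v0 w0 : Zn n → ℝ) : Set (Zn n → ℝ) :=
  {u | Periodic1 (fun _ => 1) u ∧ v0 ≤ u ∧ u ≤ w0 ∧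
    Tendsto (fun i : ℤ => u (i • e1v) - v0 (i • e1v)) atBot (nhds 0) ∧
    Tendsto (fun i : ℤ => u (i • e1v) - w0 (i • e1v)) atTop (nhds 0)}

/-- `c_1(v_0, w_0) = inf_{Γ_1(v_0,w_0)} J_1` -/
def c1 (s : (Zn n → ℝ) → ℝ) (v0 w0 : Zn n → ℝ) : ℝ :=
  sInf {y | ∃ u ∈ Gamma1 v0 w0, J1 s u = y}

/-- `M_1(v_0, w_0)`, the minimizers of `J_1` on `Γ_1(v_0, w_0)` -/
def M1 (s : (Zn n → ℝ) → ℝ) (v0 w0 : Zn n → ℝ) : Set (Zn n → ℝ) :=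
  {u | u ∈ Gamma1 v0 w0 ∧ J1 s u = c1 s v0 w0}

/-- `I_1^q(u) = liminf_{p → -∞, q' → ∞} ∑_{i=p}^{q'} ∑_{j ∈ {i} × T_1^q} [S_j(u + v_1) - c_0]` -/
def I1q (s : (Zn n → ℝ) → ℝ) (v1 : Zn n → ℝ) (q : Fin n → ℕ) (u : Zn n → ℝ) : ℝ :=
  liminf (fun pq : ℤ × ℤ =>
      ∑ i ∈ Finset.Icc pq.1 pq.2, ∑ j ∈ slab q i, (Spot s j (u + v1) - c0 s))
    (atBot ×ˢ atTop)

/-- the pairing `(I_1^q)'(u) v = ∑_{i ∈ ℤ} ∑_{j ∈ {i} × T_1^q} v(j) ∑_{k : ‖k-j‖ ≤ r} ∂_j S_k(u + v_1)` -/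
def pair1 (r : ℕ) (s : (Zn n → ℝ) → ℝ) (v1 : Zn n → ℝ) (q : Fin n → ℕ)
    (u v : Zn n → ℝ) : ℝ :=
  ∑' i : ℤ, ∑ j ∈ slab q i, v j * grad r s (u + v1) j

/-- `(I_1^q)'(u) = 0` -/
def IsCrit1 (r : ℕ) (s : (Zn n → ℝ) → ℝ) (v1 : Zn n → ℝ) (q : Fin n → ℕ)
    (u : Zn n → ℝ) : Prop :=
  ∀ v, MemLam1 q v → pair1 r s v1 q u v = 0

/-- `G_1^q = {u ∈ Λ_1^q : 0 ≤ u ≤ w_1 - v_1}` -/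
def G1 (q : Fin n → ℕ) (v1 w1 : Zn n → ℝ) : Set (Zn n → ℝ) :=
  {u | MemLam1 q u ∧ 0 ≤ u ∧ u ≤ w1 - v1}

/-- membership in `H_1^q`: a `‖·‖_{Λ_1^q}`-continuous path in `G_1^q` from `0` to `w_1 - v_1` -/
def Path1 (q : Fin n → ℕ) (v1 w1 : Zn n → ℝ) (h : ℝ → Zn n → ℝ) : Prop :=
  (∀ θ ∈ Set.Icc (0 : ℝ) 1, h θ ∈ G1 q v1 w1) ∧ h 0 = 0 ∧ h 1 = w1 - v1 ∧
  ∀ θ ∈ Set.Icc (0 : ℝ) 1, ∀ ε > (0 : ℝ), ∃ δ > (0 : ℝ), ∀ θ' ∈ Set.Icc (0 : ℝ) 1,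
    |θ' - θ| ≤ δ → lamNorm1 q (h θ' - h θ) ≤ ε

/-- the heteroclinic mountain pass level `d_1^q` -/
def d1q (s : (Zn n → ℝ) → ℝ) (v1 w1 : Zn n → ℝ) (q : Fin n → ℕ) : ℝ :=
  sInf {y | ∃ h, Path1 q v1 w1 h ∧
    y = sSup ((fun θ => I1q s v1 q (h θ)) '' Set.Icc 0 1)}

/-- `q(k) = (k, 1, …, 1) ∈ ℕ^{n-1}` (indexed by the directions `e_2, …, e_n`) -/
def qk (n k : ℕ) : Fin n → ℕ := fun m => if (m : ℕ) = 1 then k else 1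

/-! ### Auxiliary development for statement4 -/

section Aux

variable {n : ℕ}

lemma znorm_zero : znorm (0 : Zn n) = 0 := by simp [znorm]

lemma znorm_eq_zero {i : Zn n} (h : znorm i = 0) : i = 0 := by
  funext m
  have := Finset.sum_eq_zero_iff.mp h m (Finset.mem_univ m)
  simpa [Int.natAbs_eq_zero] using this

lemma znorm_neg (i : Zn n) : znorm (-i) = znorm i := by
  simp [znorm]

lemma mem_ball_zero {r : ℕ} {j : Zn n} : j ∈ ball r (0 : Zn n) ↔ znorm j ≤ r := by
  constructor
  · intro h
    have := (Finset.mem_filter.mp h).2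
    simpa using this
  · intro h
    refine Finset.mem_filter.mpr ⟨Finset.mem_Icc.mpr ⟨?_, ?_⟩, by simpa using h⟩
    · intro m
      have h1 : (j m).natAbs ≤ r := le_trans (Finset.single_le_sum (f := fun m => (j m).natAbs)
        (fun _ _ => Nat.zero_le _) (Finset.mem_univ m)) h
      simp only [Pi.zero_apply, zero_sub]
      omega
    · intro m
      have h1 : (j m).natAbs ≤ r := le_trans (Finset.single_le_sum (f := fun m => (j m).natAbs)
        (fun _ _ => Nat.zero_le _) (Finset.mem_univ m)) h
      simp only [Pi.zero_apply, zero_add]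
      omega

lemma zero_mem_ball {r : ℕ} : (0 : Zn n) ∈ ball r (0 : Zn n) :=
  mem_ball_zero.mpr (by simp [znorm_zero])

lemma znorm_unitv (m : Fin n) : znorm (unitv m) = 1 := by
  simp only [znorm, unitv]
  rw [Finset.sum_eq_single m] <;> simp +contextual

lemma unitv_ne_zero (m : Fin n) : unitv m ≠ (0 : Zn n) := by
  intro h
  have := congrFun h m
  simp [unitv] at this

/-- congruence: a `p`-periodic function takes equal values at congruent points -/
lemma periodic_congr {p : Fin n → ℕ} {u : Zn n → ℝ} (hu : Periodic p u)
    {x i : Zn n} (hcong : ∀ m, (p m : ℤ) ∣ (x m - i m)) : u x = u i := by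
  -- step 1: translation by multiples of p m in direction m
  have step : ∀ (c : ℤ) (y : Zn n) (m : Fin n), u (y + (c * p m) • unitv m) = u y := by
    intro c
    induction c using Int.induction_on with
    | zero => intro y m; simp
    | succ k ih =>
      intro y m
      have h1 : y + ((k + 1 : ℤ) * p m) • unitv m
          = (y + ((k : ℤ) * p m) • unitv m) + (p m : ℤ) • unitv m := by
        funext m'; simp [unitv]; by_cases h : m' = m <;> simp [h] <;> ring
      rw [h1, hu, ih]
    | pred k ih =>
      intro y m
      have h1 : (y + ((-(k:ℤ) - 1 : ℤ) * p m) • unitv m) + (p m : ℤ) • unitv m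
          = y + ((-(k:ℤ) : ℤ) * p m) • unitv m := by
        funext m'; simp [unitv]; by_cases h : m' = m <;> simp [h] <;> ring
      have h2 := hu (y + ((-(k:ℤ) - 1 : ℤ) * p m) • unitv m) m
      rw [h1] at h2
      rw [← h2]
      exact ih y m
  -- step 2: combine over coordinates
  classical
  have main : ∀ F : Finset (Fin n),
      u (fun m => if m ∈ F then x m else i m) = u i := by
    intro F
    induction F using Finset.induction_on with
    | empty => simp
    | @insert m F hm ih =>
      obtain ⟨c, hc⟩ := hcong m
      have h1 : (fun m' => if m' ∈ insert m F then x m' else i m')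
          = (fun m' => if m' ∈ F then x m' else i m') + (c * p m) • unitv m := by
        funext m'
        by_cases h : m' = m
        · subst h
          simp [hm, unitv, Pi.add_apply]
          linarith [hc]
        · simp [h, unitv, Pi.add_apply]
      rw [h1]
      rw [step c (fun m' => if m' ∈ F then x m' else i m') m, ih]
  have := main Finset.univ
  simpa using this

/-- a function 1-periodic in all directions is constant -/
lemma periodicAll_const {u : Zn n → ℝ} (hu : PeriodicAll u) (i j : Zn n) : u i = u j :=
  periodic_congr hu (fun m => one_dvd _)

lemma periodicAll_periodic {p : Fin n → ℕ} {u : Zn n → ℝ} (hu : PeriodicAll u) :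
    Periodic p u := fun i m => periodicAll_const hu _ _

/-- shift basic lemmas -/
lemma shift_shift (j e : Zn n) (u : Zn n → ℝ) : shift j (shift e u) = shift (j + e) u := by
  funext i; simp [shift, add_assoc]

lemma shift_zero (u : Zn n → ℝ) : shift (0 : Zn n) u = u := by
  funext i; simp [shift]

lemma shift_congr {p : Fin n → ℕ} {u : Zn n → ℝ} (hu : Periodic p u) {j j' : Zn n}
    (hcong : ∀ m, (p m : ℤ) ∣ (j m - j' m)) : shift j u = shift j' u := by
  funext i
  exact periodic_congr hu (fun m => by simpa [Pi.add_apply, add_sub_add_left_eq_sub] using hcong m)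

lemma shift_periodic {p : Fin n → ℕ} {u : Zn n → ℝ} (hu : Periodic p u) (j : Zn n) :
    Periodic p (shift j u) := by
  intro i m
  simp only [shift]
  have : i + (p m : ℤ) • unitv m + j = (i + j) + (p m : ℤ) • unitv m := by
    funext m'; simp [Pi.add_apply]; ring
  rw [this, hu]

lemma shift_mono {u v : Zn n → ℝ} (h : u ≤ v) (j : Zn n) : shift j u ≤ shift j v :=
  fun i => h (i + j)

lemma shift_add_fun (j : Zn n) (u v : Zn n → ℝ) : shift j (u + v) = shift j u + shift j v := rfl

lemma shift_inf (j : Zn n) (u v : Zn n → ℝ) : shift j (u ⊓ v) = shift j u ⊓ shift j v := rfl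

lemma shift_sup (j : Zn n) (u v : Zn n → ℝ) : shift j (u ⊔ v) = shift j u ⊔ shift j v := rfl

/-- Tbox membership -/
lemma mem_Tbox {p : Fin n → ℕ} {j : Zn n} :
    j ∈ Tbox p ↔ ∀ m, 0 ≤ j m ∧ j m ≤ (p m : ℤ) - 1 := by
  simp only [Tbox, Finset.mem_Icc, Pi.le_def]
  constructor
  · rintro ⟨h1, h2⟩ m; exact ⟨h1 m, h2 m⟩
  · intro h; exact ⟨fun m => (h m).1, fun m => (h m).2⟩

/-- reduction mod p -/
def reduce (p : Fin n → ℕ) (i : Zn n) : Zn n := fun m => i m % (p m : ℤ)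

lemma reduce_mem_Tbox {p : Fin n → ℕ} (hp : ∀ m, 1 ≤ p m) (i : Zn n) :
    reduce p i ∈ Tbox p := by
  rw [mem_Tbox]
  intro m
  have hpm : (0 : ℤ) < (p m : ℤ) := by exact_mod_cast hp m
  constructor
  · exact Int.emod_nonneg _ (by omega)
  · have := Int.emod_lt_of_pos (i m) hpm
    simp only [reduce]; omega

lemma reduce_dvd {p : Fin n → ℕ} (i : Zn n) (m : Fin n) :
    (p m : ℤ) ∣ (reduce p i m - i m) := by
  simp only [reduce]
  have : i m % (p m : ℤ) - i m = -((p m : ℤ) * (i m / (p m : ℤ)))  := by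
    rw [Int.emod_def]; ring
  rw [this]
  exact (Int.dvd_mul_right _ _).neg_right

lemma reduce_eq_self {p : Fin n → ℕ} {j : Zn n} (hj : j ∈ Tbox p) : reduce p j = j := by
  rw [mem_Tbox] at hj
  funext m
  exact Int.emod_eq_of_lt (hj m).1 (by have := (hj m).2; omega)

lemma zero_mem_Tbox {p : Fin n → ℕ} (hp : ∀ m, 1 ≤ p m) : (0 : Zn n) ∈ Tbox p := by
  rw [mem_Tbox]; intro m
  have : (1 : ℤ) ≤ (p m : ℤ) := by exact_mod_cast hp m
  constructor
  · rfl
  · simp only [Pi.zero_apply]; omega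

/-- connectivity: between a point satisfying Q and one not, there is a boundary edge -/
lemma exists_boundary (Q : Zn n → Prop) :
    ∀ N (a b : Zn n), znorm (b - a) ≤ N → Q a → ¬ Q b →
    ∃ i0 j0 : Zn n, Q i0 ∧ ¬ Q j0 ∧ znorm (j0 - i0) = 1 := by
  intro N
  induction N with
  | zero =>
    intro a b h ha hb
    exfalso
    have : b - a = 0 := znorm_eq_zero (Nat.le_zero.mp h)
    have : b = a := by funext m; have := congrFun this m; simp at this; linarith
    exact hb (this ▸ ha)
  | succ N ih =>
    intro a b h ha hb
    by_cases hab : a = b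
    · exact absurd (hab ▸ ha) hb
    · -- find a coordinate where they differ and step towards b
      have : ∃ m, a m ≠ b m := by
        by_contra hcon
        push_neg at hcon
        exact hab (funext hcon)
      obtain ⟨m, hm⟩ := this
      set σ : ℤ := if 0 < b m - a m then 1 else -1 with hσ
      set a' : Zn n := a + σ • unitv m with ha'
      have hstep : znorm (a' - a) = 1 := by
        have : a' - a = σ • unitv m := by funext m'; simp [ha', Pi.add_apply, Pi.sub_apply]
        rw [this]
        simp only [znorm]
        rw [Finset.sum_eq_single m]
        · simp [unitv, hσ]; split <;> simp
        · intro m' _ hne; simp [unitv, hne]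
        · intro h; exact absurd (Finset.mem_univ m) h
      have hdec : znorm (b - a') + 1 = znorm (b - a) := by
        have hco : ∀ m', (b - a') m' = if m' = m then (b m - a m) - σ else (b - a) m' := by
          intro m'
          by_cases h' : m' = m <;> simp [ha', h', Pi.sub_apply, Pi.add_apply, unitv] <;> ring
        simp only [znorm]
        rw [Finset.sum_eq_add_sum_sdiff_singleton_of_mem (Finset.mem_univ m) (fun m' => ((b - a') m').natAbs),
            Finset.sum_eq_add_sum_sdiff_singleton_of_mem (Finset.mem_univ m) (fun m' => ((b - a) m').natAbs)]
        have heq : ∑ m' ∈ Finset.univ \ {m}, ((b - a') m').natAbs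
            = ∑ m' ∈ Finset.univ \ {m}, ((b - a) m').natAbs := by
          apply Finset.sum_congr rfl
          intro m' hm'
          have : m' ≠ m := by simp at hm'; exact hm'
          rw [hco m', if_neg this]
        rw [heq]
        have h1 : ((b - a') m).natAbs + 1 = ((b - a) m).natAbs := by
          rw [hco m, if_pos rfl]
          have hne : b m - a m ≠ 0 := fun hc => hm (by linarith)
          simp only [Pi.sub_apply]
          split at hσ <;> omega
        omega
      by_cases hqa' : Q a'
      · exact ih a' b (by omega) hqa' hb
      · exact ⟨a, a', ha, hqa', hstep⟩

end Aux

section Calc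

variable {n r : ℕ}

/-- restriction of a configuration to the ball -/
def restr (r : ℕ) (u : Zn n → ℝ) : EuclideanSpace ℝ (ball r (0 : Zn n)) := WithLp.toLp 2 fun kk => u kk.1

/-- delta function at a site -/
def delta (k : Zn n) : Zn n → ℝ := fun i => if i = k then 1 else 0

lemma s_eq_sEuc (P : Setup n r) (u : Zn n → ℝ) : P.s u = sEuc r P.s (restr r u) := by
  unfold sEuc
  apply P.localized
  intro k hk
  rw [dif_pos (mem_ball_zero.mpr hk)]
  rfl

lemma restr_dite (x : EuclideanSpace ℝ (ball r (0 : Zn n))) :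
    restr r (fun i => if h : i ∈ ball r (0 : Zn n) then x ⟨i, h⟩ else 0) = x := by
  ext kk
  simp only [restr, kk.2, dif_pos]

lemma sEuc_diff (P : Setup n r) : Differentiable ℝ (sEuc r P.s) :=
  P.smooth.differentiable (by norm_num)

/-- first derivative functional -/
def Dk (P : Setup n r) (k : Zn n) : EuclideanSpace ℝ (ball r (0 : Zn n)) → ℝ :=
  fun x => fderiv ℝ (sEuc r P.s) x (restr r (delta k))

lemma Dk_contDiff (P : Setup n r) (k : Zn n) : ContDiff ℝ 1 (Dk P k) := by
  have h1 : ContDiff ℝ 1 (fderiv ℝ (sEuc r P.s)) := P.smooth.fderiv_right (le_refl _)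
  exact (ContinuousLinearMap.apply ℝ ℝ (restr r (delta k))).contDiff.comp h1

/-- second derivative functional -/
def D2 (P : Setup n r) (j k : Zn n) : EuclideanSpace ℝ (ball r (0 : Zn n)) → ℝ :=
  fun x => fderiv ℝ (Dk P k) x (restr r (delta j))

lemma restr_update (u : Zn n → ℝ) (j : Zn n) (t : ℝ) :
    restr r (Function.update u j t) = restr r u + (t - u j) • restr r (delta j) := by
  ext kk
  show Function.update u j t kk.1 = u kk.1 + (t - u j) * (delta j kk.1)
  rw [Function.update_apply]
  simp only [delta]
  by_cases h : kk.1 = j <;> simp [h]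

lemma hasDerivAt_line {f : EuclideanSpace ℝ (ball r (0 : Zn n)) → ℝ}
    (hf : Differentiable ℝ f) (u : Zn n → ℝ) (j : Zn n) (t₀ : ℝ) :
    HasDerivAt (fun t => f (restr r (Function.update u j t)))
      (fderiv ℝ f (restr r (Function.update u j t₀)) (restr r (delta j))) t₀ := by
  have hline : HasDerivAt (fun t : ℝ => restr r u + (t - u j) • restr r (delta j))
      (restr r (delta j)) t₀ := by
    have h1 : HasDerivAt (fun t : ℝ => (t - u j)) 1 t₀ := (hasDerivAt_id t₀).sub_const _
    have h2 := h1.smul_const (restr r (delta j))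
    rw [one_smul] at h2
    exact h2.const_add _
  have h2 : (fun t => f (restr r (Function.update u j t)))
      = f ∘ (fun t : ℝ => restr r u + (t - u j) • restr r (delta j)) := by
    funext t; simp only [Function.comp_apply]; rw [restr_update]
  rw [h2, restr_update]
  exact (hf _).hasFDerivAt.comp_hasDerivAt t₀ hline

lemma pd_eq_Dk (P : Setup n r) (k : Zn n) (u : Zn n → ℝ) :
    pd P.s k u = Dk P k (restr r u) := by
  unfold pd
  have h1 : (fun t => P.s (Function.update u k t))
      = fun t => sEuc r P.s (restr r (Function.update u k t)) := by
    funext t; exact s_eq_sEuc P _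
  rw [h1]
  have := (hasDerivAt_line (sEuc_diff P) u k (u k)).deriv
  rw [this, Function.update_eq_self]
  rfl

lemma pd2_eq_D2 (P : Setup n r) (j k : Zn n) (u : Zn n → ℝ) :
    pd2 P.s j k u = D2 P j k (restr r u) := by
  show deriv (fun t => pd P.s k (Function.update u j t)) (u j) = D2 P j k (restr r u)
  have h1 : (fun t => pd P.s k (Function.update u j t))
      = fun t => Dk P k (restr r (Function.update u j t)) := by
    funext t; exact pd_eq_Dk P k _
  rw [h1]
  have := (hasDerivAt_line ((Dk_contDiff P k).differentiable (by norm_num)) u j (u j)).deriv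
  rw [this, Function.update_eq_self]
  rfl

lemma D2_nonpos (P : Setup n r) {j k : Zn n} (hj : znorm j ≤ r) (hk : znorm k ≤ r)
    (hjk : j ≠ k) (x : EuclideanSpace ℝ (ball r (0 : Zn n))) : D2 P j k x ≤ 0 := by
  have := P.S3 j k hj hk hjk (fun i => if h : i ∈ ball r (0 : Zn n) then x ⟨i, h⟩ else 0)
  rwa [pd2_eq_D2, restr_dite] at this

lemma D2_neg (P : Setup n r) {k : Zn n} (hk : znorm k = 1) (hr : 1 ≤ r)
    (x : EuclideanSpace ℝ (ball r (0 : Zn n))) : D2 P 0 k x < 0 := by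
  have := P.S3' k hk (fun i => if h : i ∈ ball r (0 : Zn n) then x ⟨i, h⟩ else 0)
  rwa [pd2_eq_D2, restr_dite] at this

/-- single-coordinate antitonicity of `Dk` -/
lemma Dk_antitone (P : Setup n r) {j k : Zn n} (hj : znorm j ≤ r) (hk : znorm k ≤ r)
    (hjk : j ≠ k) (u : Zn n → ℝ) :
    Antitone (fun y => Dk P k (restr r (Function.update u j y))) := by
  apply antitone_of_deriv_nonpos
  · intro y
    exact (hasDerivAt_line ((Dk_contDiff P k).differentiable (by norm_num)) u j y).differentiableAt
  · intro y
    rw [(hasDerivAt_line ((Dk_contDiff P k).differentiable (by norm_num)) u j y).deriv]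
    exact D2_nonpos P hj hk hjk _

lemma Dk_strictAnti (P : Setup n r) {k : Zn n} (hk : znorm k = 1) (hr : 1 ≤ r)
    (u : Zn n → ℝ) :
    StrictAnti (fun y => Dk P k (restr r (Function.update u 0 y))) := by
  apply strictAnti_of_deriv_neg
  intro y
  rw [(hasDerivAt_line ((Dk_contDiff P k).differentiable (by norm_num)) u 0 y).deriv]
  exact D2_neg P hk hr _

end Calc

section Mono

variable {n r : ℕ}

open Function in
/-- multi-coordinate antitonicity: raising other coordinates lowers `Dk` -/
lemma Dk_mono (P : Setup n r) {k : Zn n} (hk : znorm k ≤ r) {w w' : Zn n → ℝ}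
    (hle : w ≤ w') (hkeq : w k = w' k) :
    Dk P k (restr r w') ≤ Dk P k (restr r w) := by
  classical
  have claim : ∀ F : Finset (Zn n), (∀ i ∈ F, znorm i ≤ r ∧ i ≠ k) →
      Dk P k (restr r (fun i => if i ∈ F then w' i else w i)) ≤ Dk P k (restr r w) := by
    intro F
    induction F using Finset.induction_on with
    | empty => intro _; simp
    | @insert a F ha ih =>
      intro hF
      obtain ⟨har, hak⟩ := hF a (Finset.mem_insert_self a F)
      have hmix : (fun i => if i ∈ insert a F then w' i else w i)
          = Function.update (fun i => if i ∈ F then w' i else w i) a (w' a) := by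
        funext i
        rw [Function.update_apply]
        by_cases h : i = a
        · simp [h, Finset.mem_insert_self]
        · simp [h, Finset.mem_insert]
      rw [hmix]
      have h1 := Dk_antitone P har hk hak (fun i => if i ∈ F then w' i else w i)
        (hle a)
      have h2 : (fun i => if i ∈ F then w' i else w i) a = w a := by simp [ha]
      calc Dk P k (restr r (Function.update (fun i => if i ∈ F then w' i else w i) a (w' a)))
          ≤ Dk P k (restr r (Function.update (fun i => if i ∈ F then w' i else w i) a
              ((fun i => if i ∈ F then w' i else w i) a))) := by
            rw [h2]; exact h1
        _ = Dk P k (restr r (fun i => if i ∈ F then w' i else w i)) := by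
            rw [Function.update_eq_self]
        _ ≤ Dk P k (restr r w) := ih (fun i hi => hF i (Finset.mem_insert_of_mem hi))
  have key := claim ((ball r (0 : Zn n)).erase k) (by
    intro i hi
    obtain ⟨hik, hib⟩ := Finset.mem_erase.mp hi
    exact ⟨mem_ball_zero.mp hib, hik⟩)
  have heq : restr r (fun i => if i ∈ (ball r (0 : Zn n)).erase k then w' i else w i)
      = restr r w' := by
    ext kk
    show (if kk.1 ∈ (ball r (0 : Zn n)).erase k then w' kk.1 else w kk.1) = w' kk.1
    by_cases h : kk.1 = k
    · rw [if_neg (by simp [h]), h, hkeq]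
    · rw [if_pos (Finset.mem_erase.mpr ⟨h, kk.2⟩)]
  rwa [heq] at key

/-- strict version via (S3') -/
lemma Dk_strict (P : Setup n r) {k : Zn n} (hk : znorm k = 1) (hr : 1 ≤ r)
    {w w' : Zn n → ℝ} (hle : w ≤ w') (hkeq : w k = w' k) (h0 : w 0 < w' 0) :
    Dk P k (restr r w') < Dk P k (restr r w) := by
  have hk0 : k ≠ (0 : Zn n) := by
    intro h; rw [h, znorm_zero] at hk; omega
  have hkr : znorm k ≤ r := hk ▸ hr
  have step1 : Dk P k (restr r w') ≤ Dk P k (restr r (Function.update w 0 (w' 0))) := by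
    apply Dk_mono P hkr
    · intro i
      rw [Function.update_apply]
      by_cases h : i = 0
      · subst h; simp
      · simp [h]; exact hle i
    · rw [Function.update_apply, if_neg hk0, hkeq]
  have step2 : Dk P k (restr r (Function.update w 0 (w' 0)))
      < Dk P k (restr r (Function.update w 0 (w 0))) := Dk_strictAnti P hk hr w h0
  rw [Function.update_eq_self] at step2
  exact lt_of_le_of_lt step1 step2

/-- two-point lemma: increments are cheaper above -/
lemma s_incr (P : Setup n r) {k : Zn n} (hk : znorm k ≤ r) {w w' : Zn n → ℝ}
    (hle : w ≤ w') (hkeq : w k = w' k) {t : ℝ} (ht : w k ≤ t) :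
    P.s (Function.update w' k t) - P.s w' ≤ P.s (Function.update w k t) - P.s w := by
  set φ : ℝ → ℝ := fun t => P.s (Function.update w' k t) - P.s (Function.update w k t)
    with hφ
  have hder : ∀ t₀, HasDerivAt φ
      (Dk P k (restr r (Function.update w' k t₀)) - Dk P k (restr r (Function.update w k t₀))) t₀ := by
    intro t₀
    have h1 : ∀ (v : Zn n → ℝ), HasDerivAt (fun t => P.s (Function.update v k t))
        (Dk P k (restr r (Function.update v k t₀))) t₀ := by
      intro v
      have heq : (fun t => P.s (Function.update v k t))
          = fun t => sEuc r P.s (restr r (Function.update v k t)) := by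
        funext t; exact s_eq_sEuc P _
      rw [heq]
      exact hasDerivAt_line (sEuc_diff P) v k t₀
    exact (h1 w').sub (h1 w)
  have hanti : Antitone φ := by
    apply antitone_of_deriv_nonpos
    · intro y; exact (hder y).differentiableAt
    · intro y
      rw [(hder y).deriv]
      have := Dk_mono P hk (w := Function.update w k y) (w' := Function.update w' k y)
        (fun i => by
          rw [Function.update_apply, Function.update_apply]
          by_cases h : i = k
          · simp [h]
          · simp [h]; exact hle i)
        (by rw [Function.update_self, Function.update_self])
      linarith
  have h2 := hanti ht
  simp only [hφ] at h2
  have e1 : Function.update w k (w k) = w := Function.update_eq_self _ _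
  have e2 : Function.update w' k (w k) = w' := by rw [hkeq]; exact Function.update_eq_self _ _
  rw [e1, e2] at h2
  linarith

end Mono

section Submod

variable {n r : ℕ}

lemma s_eq_of_ball_eq (P : Setup n r) {u v : Zn n → ℝ}
    (h : ∀ i, znorm i ≤ r → u i = v i) : P.s u = P.s v := P.localized u v h

lemma s_submod_aux (P : Setup n r) : ∀ N (F : Finset (Zn n)), F.card ≤ N →
    ∀ u v : Zn n → ℝ, (∀ i, znorm i ≤ r → v i < u i → i ∈ F) →
    P.s (u ⊓ v) + P.s (u ⊔ v) ≤ P.s u + P.s v := by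
  intro N
  induction N with
  | zero =>
    intro F hF u v hcond
    have hFe : F = ∅ := Finset.card_eq_zero.mp (Nat.le_zero.mp hF)
    have hle : ∀ i, znorm i ≤ r → u i ≤ v i := by
      intro i hi
      by_contra hcon
      have := hcond i hi (lt_of_not_ge hcon)
      simp [hFe] at this
    have e1 : P.s (u ⊓ v) = P.s u :=
      s_eq_of_ball_eq P (fun i hi => inf_eq_left.mpr (hle i hi))
    have e2 : P.s (u ⊔ v) = P.s v :=
      s_eq_of_ball_eq P (fun i hi => sup_eq_right.mpr (hle i hi))
    rw [e1, e2]
  | succ N ih =>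
    intro F hF u v hcond
    by_cases hbad : ∃ k, znorm k ≤ r ∧ v k < u k
    · obtain ⟨k, hkr, hkv⟩ := hbad
      have hkF : k ∈ F := hcond k hkr hkv
      set u' : Zn n → ℝ := Function.update u k (v k) with hu'
      -- the infima agree
      have hmin : u' ⊓ v = u ⊓ v := by
        funext i
        show min (u' i) (v i) = min (u i) (v i)
        by_cases h : i = k
        · subst h
          rw [hu', Function.update_self, min_self, min_eq_right (le_of_lt hkv)]
        · rw [hu', Function.update_of_ne h]
      -- two-point lemma
      have htp := s_incr P hkr (w := u') (w' := u' ⊔ v) le_sup_left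
        (by
          show u' k = max (u' k) (v k)
          rw [hu', Function.update_self, max_self])
        (t := u k)
        (by rw [hu', Function.update_self]; exact le_of_lt hkv)
      have e3 : Function.update u' k (u k) = u := by
        rw [hu', Function.update_idem, Function.update_eq_self]
      have e4 : Function.update (u' ⊔ v) k (u k) = u ⊔ v := by
        funext i
        rw [Function.update_apply]
        by_cases h : i = k
        · rw [if_pos h, h]
          show u k = max (u k) (v k)
          rw [max_eq_left (le_of_lt hkv)]
        · rw [if_neg h]
          show max (u' i) (v i) = max (u i) (v i)
          rw [hu', Function.update_of_ne h]
      rw [e3, e4] at htp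
      -- induction hypothesis applied to (u', v) and F.erase k
      have hcard : (F.erase k).card ≤ N := by
        have := Finset.card_erase_of_mem hkF
        omega
      have hih := ih (F.erase k) hcard u' v (by
        intro i hi hvi
        apply Finset.mem_erase.mpr
        constructor
        · intro hik
          rw [hik, hu', Function.update_self] at hvi
          exact lt_irrefl _ hvi
        · apply hcond i hi
          rw [hu', Function.update_apply] at hvi
          by_cases h : i = k
          · rw [if_pos h] at hvi; exact absurd (h ▸ hvi) (lt_irrefl _)
          · rwa [if_neg h] at hvi)
      rw [hmin] at hih
      linarith
    · push_neg at hbad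
      have e1 : P.s (u ⊓ v) = P.s u :=
        s_eq_of_ball_eq P (fun i hi => inf_eq_left.mpr (hbad i hi))
      have e2 : P.s (u ⊔ v) = P.s v :=
        s_eq_of_ball_eq P (fun i hi => sup_eq_right.mpr (hbad i hi))
      rw [e1, e2]

lemma s_submod (P : Setup n r) (u v : Zn n → ℝ) :
    P.s (u ⊓ v) + P.s (u ⊔ v) ≤ P.s u + P.s v := by
  classical
  apply s_submod_aux P ((ball r (0 : Zn n)).card) (ball r (0 : Zn n)) (le_refl _)
  intro i hi _
  exact mem_ball_zero.mpr hi

lemma J0p_submod (P : Setup n r) (p : Fin n → ℕ) (u v : Zn n → ℝ) :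
    J0p P.s p (u ⊓ v) + J0p P.s p (u ⊔ v) ≤ J0p P.s p u + J0p P.s p v := by
  unfold J0p Spot
  rw [← Finset.sum_add_distrib, ← Finset.sum_add_distrib]
  apply Finset.sum_le_sum
  intro j _
  rw [shift_inf, shift_sup]
  exact s_submod P _ _

end Submod

section Energy

variable {n r : ℕ}

lemma J0p_bddBelow (P : Setup n r) (p : Fin n → ℕ) {bs : ℝ} (hbs : ∀ u, bs ≤ P.s u)
    (u : Zn n → ℝ) : ((Tbox p).card : ℝ) * bs ≤ J0p P.s p u := by
  unfold J0p Spot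
  calc ((Tbox p).card : ℝ) * bs = ∑ _j ∈ Tbox p, bs := by
        rw [Finset.sum_const, nsmul_eq_mul]
    _ ≤ _ := Finset.sum_le_sum (fun j _ => hbs _)

lemma c0p_le (P : Setup n r) (p : Fin n → ℕ) {u : Zn n → ℝ} (hu : Periodic p u) :
    c0p P.s p ≤ J0p P.s p u := by
  obtain ⟨bs, hbs⟩ := P.S2_bddBelow
  apply csInf_le
  · exact ⟨((Tbox p).card : ℝ) * bs, fun y ⟨v, hv, hy⟩ => hy ▸ J0p_bddBelow P p hbs v⟩
  · exact ⟨u, hu, rfl⟩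

lemma c0_le (P : Setup n r) {u : Zn n → ℝ} (hu : PeriodicAll u) :
    c0 P.s ≤ J0 P.s u := by
  obtain ⟨bs, hbs⟩ := P.S2_bddBelow
  apply csInf_le
  · exact ⟨bs, fun y ⟨v, hv, hy⟩ => hy ▸ hbs _⟩
  · exact ⟨u, hu, rfl⟩

/-- shift invariance of the periodic energy -/
lemma J0p_shift_inv (P : Setup n r) {p : Fin n → ℕ} (hp : ∀ m, 1 ≤ p m)
    {u : Zn n → ℝ} (hu : Periodic p u) (m : Fin n) :
    J0p P.s p (shift (unitv m) u) = J0p P.s p u := by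
  unfold J0p Spot
  rw [Finset.sum_congr rfl (fun j _ => by rw [shift_shift])]
  -- now: ∑_{j ∈ Tbox} f (j + unitv m) = ∑ f j  with f j = s (shift j u)
  have hpm : (0 : ℤ) < (p m : ℤ) := by exact_mod_cast hp m
  apply Finset.sum_nbij' (i := fun j => Function.update j m ((j m + 1) % (p m : ℤ)))
    (j := fun j => Function.update j m (if j m = 0 then (p m : ℤ) - 1 else j m - 1))
  · intro j hj
    rw [mem_Tbox] at hj ⊢
    intro m'
    rw [Function.update_apply]
    by_cases h : m' = m
    · rw [if_pos h, h]
      constructor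
      · exact Int.emod_nonneg _ (by omega)
      · have := Int.emod_lt_of_pos (j m + 1) hpm; omega
    · rw [if_neg h]; exact hj m'
  · intro j hj
    rw [mem_Tbox] at hj ⊢
    intro m'
    rw [Function.update_apply]
    by_cases h : m' = m
    · rw [if_pos h, h]
      obtain ⟨h1, h2⟩ := hj m
      split <;> omega
    · rw [if_neg h]; exact hj m'
  · intro j hj
    rw [mem_Tbox] at hj
    funext m'
    rw [Function.update_apply]
    by_cases h : m' = m
    · rw [if_pos h, Function.update_self, h]
      obtain ⟨h1, h2⟩ := hj m
      by_cases hc : j m = (p m : ℤ) - 1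
      · rw [hc]
        have : ((p m : ℤ) - 1 + 1) % (p m : ℤ) = 0 := by
          rw [sub_add_cancel, Int.emod_self]
        rw [this, if_pos rfl]
      · have : (j m + 1) % (p m : ℤ) = j m + 1 := Int.emod_eq_of_lt (by omega) (by omega)
        rw [this, if_neg (by omega)]
        ring
    · rw [if_neg h, Function.update_apply, if_neg h]
  · intro j hj
    rw [mem_Tbox] at hj
    funext m'
    rw [Function.update_apply]
    by_cases h : m' = m
    · rw [if_pos h, Function.update_self, h]
      obtain ⟨h1, h2⟩ := hj m
      by_cases hc : j m = 0
      · rw [if_pos hc, hc]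
        rw [sub_add_cancel, Int.emod_self]
      · rw [if_neg hc]
        rw [sub_add_cancel]
        exact Int.emod_eq_of_lt (by omega) (by omega)
    · rw [if_neg h, Function.update_apply, if_neg h]
  · intro j hj
    apply congrArg
    apply shift_congr hu
    intro m'
    rw [Pi.add_apply]
    by_cases h : m' = m
    · subst h
      rw [Function.update_self]
      have h1 : unitv m' m' = 1 := by simp [unitv]
      rw [h1]
      have h2 : j m' + 1 - (j m' + 1) % (p m' : ℤ) = (p m' : ℤ) * ((j m' + 1) / (p m' : ℤ)) := by
        rw [Int.emod_def]; ring
      rw [h2]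
      exact Dvd.intro _ rfl
    · rw [Function.update_of_ne h]
      have h1 : unitv m m' = 0 := by simp [unitv, h]
      rw [h1]
      simp

end Energy

section EL

variable {n r : ℕ}

/-- periodic delta function: indicator of the congruence class of `i` mod `p` -/
def chi (p : Fin n → ℕ) (i : Zn n) : Zn n → ℝ :=
  fun x => if ∀ m, (x m - i m) % (p m : ℤ) = 0 then 1 else 0

lemma chi_cases (p : Fin n → ℕ) (i x : Zn n) :
    (chi p i x = 1 ∧ ∀ m, (p m : ℤ) ∣ (x m - i m)) ∨ chi p i x = 0 := by
  unfold chi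
  by_cases h : ∀ m, (x m - i m) % (p m : ℤ) = 0
  · exact Or.inl ⟨if_pos h, fun m => Int.dvd_of_emod_eq_zero (h m)⟩
  · exact Or.inr (if_neg h)

lemma chi_eq_one (p : Fin n → ℕ) {i x : Zn n} (h : ∀ m, (p m : ℤ) ∣ (x m - i m)) :
    chi p i x = 1 :=
  if_pos (fun m => Int.emod_eq_zero_of_dvd (h m))

lemma chi_periodic (p : Fin n → ℕ) (i : Zn n) : Periodic p (chi p i) := by
  intro x m
  unfold chi
  congr 1
  simp only [eq_iff_iff]
  have key : ∀ m', (x + (p m : ℤ) • unitv m) m' - i m'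
      = if m' = m then (x m' - i m') + (p m : ℤ) else x m' - i m' := by
    intro m'
    simp only [Pi.add_apply, Pi.smul_apply, unitv, smul_eq_mul]
    split <;> simp <;> ring
  constructor <;> intro h m' <;> have hh := h m'
  · rw [key] at hh
    by_cases hm : m' = m
    · rw [if_pos hm, hm] at hh; rw [show x m - i m + (p m : ℤ) = x m - i m + (p m : ℤ) * 1 by ring, Int.add_mul_emod_self_left] at hh
      exact hm ▸ hh
    · rwa [if_neg hm] at hh
  · rw [key]
    by_cases hm : m' = m
    · rw [if_pos hm, hm]; rw [show x m - i m + (p m : ℤ) = x m - i m + (p m : ℤ) * 1 by ring, Int.add_mul_emod_self_left]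
      exact hm ▸ hh
    · rwa [if_neg hm]

/-- line restriction -/
lemma restr_dir (u c : Zn n → ℝ) (t : ℝ) :
    restr r (fun i => u i + t * c i) = restr r u + t • restr r c := rfl

lemma hasDerivAt_dir {f : EuclideanSpace ℝ (ball r (0 : Zn n)) → ℝ}
    (hf : Differentiable ℝ f) (u c : Zn n → ℝ) (t₀ : ℝ) :
    HasDerivAt (fun t => f (restr r (fun i => u i + t * c i)))
      (fderiv ℝ f (restr r (fun i => u i + t₀ * c i)) (restr r c)) t₀ := by
  have hline : HasDerivAt (fun t : ℝ => restr r u + t • restr r c) (restr r c) t₀ := by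
    have h1 := (hasDerivAt_id t₀).smul_const (restr r c)
    rw [one_smul] at h1
    exact h1.const_add _
  have h2 : (fun t => f (restr r (fun i => u i + t * c i)))
      = f ∘ (fun t : ℝ => restr r u + t • restr r c) := by
    funext t; simp only [Function.comp_apply]; rw [restr_dir]
  rw [h2, restr_dir]
  exact (hf _).hasFDerivAt.comp_hasDerivAt t₀ hline

/-- the EL pairing `(J_0^p)'(u) χ_i` -/
def ELf (P : Setup n r) (p : Fin n → ℕ) (i : Zn n) (u : Zn n → ℝ) : ℝ :=
  ∑ j ∈ Tbox p, fderiv ℝ (sEuc r P.s) (restr r (shift j u)) (restr r (shift j (chi p i)))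

lemma J0p_line_hasDerivAt (P : Setup n r) (p : Fin n → ℕ) (u c : Zn n → ℝ) (t₀ : ℝ) :
    HasDerivAt (fun t => J0p P.s p (fun i => u i + t * c i))
      (∑ j ∈ Tbox p, fderiv ℝ (sEuc r P.s)
        (restr r (shift j (fun i => u i + t₀ * c i))) (restr r (shift j c))) t₀ := by
  have h1 : (fun t => J0p P.s p (fun i => u i + t * c i))
      = fun t => ∑ j ∈ Tbox p, sEuc r P.s (restr r (fun i' => (shift j u) i' + t * (shift j c) i')) := by
    funext t
    unfold J0p Spot
    apply Finset.sum_congr rfl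
    intro j _
    rw [s_eq_sEuc P]
    rfl
  rw [h1]
  apply HasDerivAt.fun_sum
  intro j _
  exact hasDerivAt_dir (sEuc_diff P) (shift j u) (shift j c) t₀

/-- first-order condition at a constrained minimizer -/
lemma ELf_eq_zero (P : Setup n r) {p : Fin n → ℕ} {u : Zn n → ℝ}
    (hu : Periodic p u) (hmin : J0p P.s p u = c0p P.s p) (i : Zn n) :
    ELf P p i u = 0 := by
  set f : ℝ → ℝ := fun t => J0p P.s p (fun i' => u i' + t * chi p i i') with hf
  have hper : ∀ t : ℝ, Periodic p (fun i' => u i' + t * chi p i i') := by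
    intro t x m
    simp only
    rw [hu x m, chi_periodic p i x m]
  have hmin0 : ∀ t, f 0 ≤ f t := by
    intro t
    have h0 : f 0 = J0p P.s p u := by
      simp only [hf]
      congr 1
      funext i'
      simp
    rw [h0, hmin]
    exact c0p_le P p (hper t)
  have hloc : IsLocalMin f 0 := Filter.Eventually.of_forall hmin0
  have hder := J0p_line_hasDerivAt P p u (chi p i) 0
  have := hloc.hasDerivAt_eq_zero hder
  rw [← this]
  unfold ELf
  apply Finset.sum_congr rfl
  intro j _
  congr 2
  congr 1
  funext i'
  simp [shift]

end EL

section Compare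

variable {n r : ℕ}

lemma restr_expand (c : Zn n → ℝ) :
    restr r c = ∑ kk : {x // x ∈ ball r (0 : Zn n)}, c kk.1 • restr r (delta kk.1) := by
  ext jj
  rw [WithLp.ofLp_sum, Finset.sum_apply]
  have : ∀ kk : {x // x ∈ ball r (0 : Zn n)},
      (c kk.1 • restr r (delta kk.1)) jj = c kk.1 * (if jj.1 = kk.1 then 1 else 0) := by
    intro kk; rfl
  rw [Finset.sum_congr rfl (fun kk _ => this kk)]
  rw [Finset.sum_eq_single jj]
  · simp [restr]
  · intro kk _ hkk
    rw [if_neg (fun h => hkk (Subtype.ext h.symm)), mul_zero]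
  · intro h; exact absurd (Finset.mem_univ jj) h

lemma fderiv_expand (P : Setup n r) (x : EuclideanSpace ℝ (ball r (0 : Zn n)))
    (c : Zn n → ℝ) :
    fderiv ℝ (sEuc r P.s) x (restr r c)
      = ∑ kk : {x // x ∈ ball r (0 : Zn n)}, c kk.1 * Dk P kk.1 x := by
  rw [restr_expand, map_sum]
  apply Finset.sum_congr rfl
  intro kk _
  rw [map_smul]
  rfl

lemma ELf_lt (P : Setup n r) (hr : 1 ≤ r) {p : Fin n → ℕ} (hp : ∀ m, 1 ≤ p m)
    {w w' : Zn n → ℝ} (hw : Periodic p w) (hw' : Periodic p w') (hle : w ≤ w')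
    {i0 j0 : Zn n} (heq : w i0 = w' i0) (hnb : znorm (j0 - i0) = 1) (hlt : w j0 < w' j0) :
    ELf P p i0 w' < ELf P p i0 w := by
  unfold ELf
  have hexp : ∀ (v : Zn n → ℝ) (j : Zn n),
      fderiv ℝ (sEuc r P.s) (restr r (shift j v)) (restr r (shift j (chi p i0)))
      = ∑ kk : {x // x ∈ ball r (0 : Zn n)},
          chi p i0 (kk.1 + j) * Dk P kk.1 (restr r (shift j v)) := by
    intro v j
    exact fderiv_expand P _ (shift j (chi p i0))
  have hterm : ∀ (j : Zn n), ∀ kk : {x // x ∈ ball r (0 : Zn n)},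
      chi p i0 (kk.1 + j) * Dk P kk.1 (restr r (shift j w'))
      ≤ chi p i0 (kk.1 + j) * Dk P kk.1 (restr r (shift j w)) := by
    intro j kk
    rcases chi_cases p i0 (kk.1 + j) with ⟨h1, hcong⟩ | h0
    · rw [h1, one_mul, one_mul]
      apply Dk_mono P (mem_ball_zero.mp kk.2) (shift_mono hle j)
      show w (kk.1 + j) = w' (kk.1 + j)
      rw [periodic_congr hw hcong, periodic_congr hw' hcong, heq]
    · rw [h0, zero_mul, zero_mul]
  -- strict data
  have hk1 : znorm (i0 - j0) = 1 := by
    have : i0 - j0 = -(j0 - i0) := by funext m; simp [Pi.sub_apply, Pi.neg_apply]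
    rw [this, znorm_neg, hnb]
  have hkmem : (i0 - j0) ∈ ball r (0 : Zn n) := mem_ball_zero.mpr (by omega)
  have hjmem : reduce p j0 ∈ Tbox p := reduce_mem_Tbox hp j0
  have hcongst : ∀ m, (p m : ℤ) ∣ ((i0 - j0) m + (reduce p j0) m - i0 m) := by
    intro m
    have h1 : (i0 - j0) m + (reduce p j0) m - i0 m = (reduce p j0) m - j0 m := by
      simp [Pi.sub_apply]; ring
    rw [h1]
    exact reduce_dvd j0 m
  have hstrict : Dk P (i0 - j0) (restr r (shift (reduce p j0) w'))
      < Dk P (i0 - j0) (restr r (shift (reduce p j0) w)) := by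
    apply Dk_strict P hk1 hr (shift_mono hle (reduce p j0))
    · show w ((i0 - j0) + reduce p j0) = w' ((i0 - j0) + reduce p j0)
      have hc : ∀ m, (p m : ℤ) ∣ (((i0 - j0) + reduce p j0) m - i0 m) := by
        intro m
        have := hcongst m
        simpa [Pi.add_apply] using this
      rw [periodic_congr hw hc, periodic_congr hw' hc, heq]
    · show w ((0 : Zn n) + reduce p j0) < w' ((0 : Zn n) + reduce p j0)
      rw [zero_add]
      have hc : ∀ m, (p m : ℤ) ∣ ((reduce p j0) m - j0 m) := reduce_dvd j0
      rw [periodic_congr hw hc, periodic_congr hw' hc]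
      exact hlt
  apply Finset.sum_lt_sum
  · intro j _
    rw [hexp w j, hexp w' j]
    exact Finset.sum_le_sum (fun kk _ => hterm j kk)
  · refine ⟨reduce p j0, hjmem, ?_⟩
    rw [hexp w _, hexp w' _]
    apply Finset.sum_lt_sum
    · intro kk _; exact hterm _ kk
    · refine ⟨⟨i0 - j0, hkmem⟩, Finset.mem_univ _, ?_⟩
      have hone : chi p i0 ((i0 - j0) + reduce p j0) = 1 := by
        apply chi_eq_one
        intro m
        simpa [Pi.add_apply] using hcongst m
      show chi p i0 ((i0 - j0) + reduce p j0) * _ < chi p i0 ((i0 - j0) + reduce p j0) * _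
      rw [hone, one_mul, one_mul]
      exact hstrict

end Compare

section Struct

variable {n r : ℕ}

lemma inf_periodic {p : Fin n → ℕ} {u v : Zn n → ℝ} (hu : Periodic p u) (hv : Periodic p v) :
    Periodic p (u ⊓ v) := by
  intro i m
  show min (u _) (v _) = min (u i) (v i)
  rw [hu, hv]

lemma sup_periodic {p : Fin n → ℕ} {u v : Zn n → ℝ} (hu : Periodic p u) (hv : Periodic p v) :
    Periodic p (u ⊔ v) := by
  intro i m
  show max (u _) (v _) = max (u i) (v i)
  rw [hu, hv]

lemma minimizer_shift_eq (P : Setup n r) (hr : 1 ≤ r) {p : Fin n → ℕ} (hp : ∀ m, 1 ≤ p m)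
    {u : Zn n → ℝ} (hu : Periodic p u) (hmin : J0p P.s p u = c0p P.s p) (m : Fin n) :
    shift (unitv m) u = u := by
  set v := shift (unitv m) u with hv
  have hvper : Periodic p v := shift_periodic hu (unitv m)
  have hvmin : J0p P.s p v = c0p P.s p := by
    rw [hv, J0p_shift_inv P hp hu m, hmin]
  -- dichotomy
  have hdich : u ≤ v ∨ v ≤ u := by
    by_contra hcon
    push_neg at hcon
    obtain ⟨h1, h2⟩ := hcon
    rw [Pi.le_def] at h1 h2
    push_neg at h1 h2
    obtain ⟨a, ha⟩ := h1  -- v a < u a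
    obtain ⟨b, hb⟩ := h2  -- u b < v b
    set M := u ⊓ v with hM
    have hMper : Periodic p M := inf_periodic hu hvper
    have hMmin : J0p P.s p M = c0p P.s p := by
      have hsub := J0p_submod P p u v
      have hc1 := c0p_le P p hMper
      have hc2 := c0p_le P p (sup_periodic hu hvper)
      rw [hmin, hvmin] at hsub
      linarith
    have hMle : M ≤ u := inf_le_left
    -- boundary point of the coincidence set
    have hQb : M b = u b := by
      show min (u b) (v b) = u b
      exact min_eq_left (le_of_lt hb)
    have hQa : ¬ (M a = u a) := by
      show ¬ (min (u a) (v a) = u a)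
      intro hcon2
      rw [min_eq_right (le_of_lt ha)] at hcon2
      exact absurd hcon2 (ne_of_lt ha)
    obtain ⟨i0, j0, hi0, hj0, hnb⟩ :=
      exists_boundary (fun i => M i = u i) (znorm (a - b)) b a (le_refl _) hQb hQa
    have hj0lt : M j0 < u j0 := lt_of_le_of_ne (hMle j0) hj0
    have hELu := ELf_eq_zero P hu hmin i0
    have hELM := ELf_eq_zero P hMper hMmin i0
    have := ELf_lt P hr hp hMper hu hMle hi0 hnb hj0lt
    rw [hELu, hELM] at this
    exact lt_irrefl 0 this
  -- from the dichotomy to equality, pointwise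
  funext i
  have hchain : ∀ (k : ℕ), u (i + (k : ℤ) • unitv m) = (fun k : ℕ => u (i + (k : ℤ) • unitv m)) k :=
    fun k => rfl
  set c : ℕ → ℝ := fun k => u (i + (k : ℤ) • unitv m) with hcdef
  have hstep : ∀ k : ℕ, i + (k : ℤ) • unitv m + unitv m = i + ((k + 1 : ℕ) : ℤ) • unitv m := by
    intro k
    funext m'
    simp only [Pi.add_apply, Pi.smul_apply, smul_eq_mul]
    push_cast
    ring
  have hcp : c (p m) = c 0 := by
    show u (i + ((p m : ℕ) : ℤ) • unitv m) = u (i + ((0 : ℕ) : ℤ) • unitv m)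
    rw [Nat.cast_zero, zero_smul, add_zero]
    exact hu i m
  have hc1 : c 1 = c 0 → v i = u i := by
    intro h
    show u (i + unitv m) = u i
    have h' : u (i + ((1 : ℕ) : ℤ) • unitv m) = u (i + ((0 : ℕ) : ℤ) • unitv m) := h
    rw [Nat.cast_one, one_smul, Nat.cast_zero, zero_smul, add_zero] at h'
    exact h'
  rcases hdich with hle | hle
  · -- u ≤ v : c is monotone
    have hmono : Monotone c := by
      apply monotone_nat_of_le_succ
      intro k
      have := hle (i + (k : ℤ) • unitv m)
      rw [hv] at this
      simp only [shift] at this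
      rw [hstep k] at this
      exact this
    have h01 : c 0 ≤ c 1 := hmono (Nat.zero_le 1)
    have h1p : c 1 ≤ c (p m) := hmono (hp m)
    have : c 1 = c 0 := le_antisymm (hcp ▸ h1p) h01
    exact hc1 this
  · -- v ≤ u : c is antitone
    have hmono : Antitone c := by
      apply antitone_nat_of_succ_le
      intro k
      have := hle (i + (k : ℤ) • unitv m)
      rw [hv] at this
      simp only [shift] at this
      rw [hstep k] at this
      exact this
    have h01 : c 1 ≤ c 0 := hmono (Nat.zero_le 1)
    have h1p : c (p m) ≤ c 1 := hmono (hp m)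
    have : c 1 = c 0 := le_antisymm h01 (hcp ▸ h1p)
    exact hc1 this

/-- a `p`-periodic minimizer of `J_0^p` is constant -/
lemma minimizer_const (P : Setup n r) (hr : 1 ≤ r) {p : Fin n → ℕ} (hp : ∀ m, 1 ≤ p m)
    {u : Zn n → ℝ} (hu : Periodic p u) (hmin : J0p P.s p u = c0p P.s p) :
    ∀ i j, u i = u j := by
  have hPA : PeriodicAll u := by
    intro i m
    have := congrFun (minimizer_shift_eq P hr hp hu hmin m) i
    simp only [shift] at this
    rw [← this]
    congr 1
    funext m'
    simp [Pi.smul_apply]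
  exact fun i j => periodicAll_const hPA i j

end Struct

section Topo

variable {n r : ℕ}

lemma r_pos (P : Setup n r) : 1 ≤ r := by
  by_contra hcon
  have hr0 : r = 0 := by omega
  subst hr0
  set m0 : Fin n := ⟨0, P.npos⟩ with hm0
  have hpd : ∀ w : Zn n → ℝ, pd P.s (unitv m0) w = 0 := by
    intro w
    unfold pd
    have hconst : (fun t => P.s (Function.update w (unitv m0) t)) = fun _ => P.s w := by
      funext t
      apply P.localized
      intro k hk
      have hk0 : k = 0 := znorm_eq_zero (Nat.le_zero.mp hk)
      rw [Function.update_apply, if_neg, hk0]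
      rw [hk0]
      exact fun hc => unitv_ne_zero m0 hc.symm
    rw [hconst, deriv_const]
  have hS := P.S3' (unitv m0) (znorm_unitv m0) 0
  have hzero : pd2 P.s 0 (unitv m0) 0 = 0 := by
    show deriv (fun t => pd P.s (unitv m0) (Function.update (0 : Zn n → ℝ) 0 t))
      ((0 : Zn n → ℝ) 0) = 0
    have hconst : (fun t => pd P.s (unitv m0) (Function.update (0 : Zn n → ℝ) 0 t))
        = fun _ => (0 : ℝ) := by
      funext t
      exact hpd _
    rw [hconst, deriv_const]
  rw [hzero] at hS
  exact lt_irrefl 0 hS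

lemma reduce_add_period (p : Fin n → ℕ) (i : Zn n) (m : Fin n) :
    reduce p (i + (p m : ℤ) • unitv m) = reduce p i := by
  funext m'
  simp only [reduce, Pi.add_apply, Pi.smul_apply, unitv, smul_eq_mul]
  by_cases h : m' = m
  · rw [if_pos h, mul_one, h]
    rw [show i m + (p m : ℤ) = i m + (p m : ℤ) * 1 by ring, Int.add_mul_emod_self_left]
  · rw [if_neg h, mul_zero, add_zero]

lemma extendP_eq (p : Fin n → ℕ) (x : EuclideanSpace ℝ (Tbox (n := n) p)) (i : Zn n) :
    extendP p x i = if h : reduce p i ∈ Tbox p then x ⟨reduce p i, h⟩ else 0 := rfl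

lemma extendP_apply {p : Fin n → ℕ} (hp : ∀ m, 1 ≤ p m) (x : EuclideanSpace ℝ (Tbox (n := n) p))
    (i : Zn n) : extendP p x i = x ⟨reduce p i, reduce_mem_Tbox hp i⟩ := by
  rw [extendP_eq, dif_pos (reduce_mem_Tbox hp i)]

lemma extendP_periodic {p : Fin n → ℕ} (hp : ∀ m, 1 ≤ p m)
    (x : EuclideanSpace ℝ (Tbox (n := n) p)) : Periodic p (extendP p x) := by
  intro i m
  rw [extendP_apply hp, extendP_apply hp]
  exact congrArg (fun jj => x jj) (Subtype.ext (reduce_add_period p i m))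

lemma extendP_toEuc {p : Fin n → ℕ} (hp : ∀ m, 1 ≤ p m) {u : Zn n → ℝ}
    (hu : Periodic p u) : extendP p (toEuc p u) = u := by
  funext i
  rw [extendP_apply hp]
  show u (reduce p i) = u i
  exact periodic_congr hu (reduce_dvd i)

lemma reduce_zero {p : Fin n → ℕ} : reduce p (0 : Zn n) = 0 := by
  funext m; simp [reduce]

lemma add_periodic {p : Fin n → ℕ} {u v : Zn n → ℝ} (hu : Periodic p u) (hv : Periodic p v) :
    Periodic p (u + v) := by
  intro i m
  show u _ + v _ = u i + v i
  rw [hu, hv]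

/-- continuity of the energy in the euclidean coordinates -/
lemma FF_cont (P : Setup n r) {p : Fin n → ℕ} (hp : ∀ m, 1 ≤ p m) (v0 : Zn n → ℝ) :
    Continuous (fun x : EuclideanSpace ℝ (Tbox (n := n) p) => I0p P.s p v0 (extendP p x)) := by
  have heq : (fun x : EuclideanSpace ℝ (Tbox (n := n) p) => I0p P.s p v0 (extendP p x))
      = fun x => ∑ j ∈ Tbox p, sEuc r P.s (restr r (shift j (extendP p x + v0))) := by
    funext x
    unfold I0p J0p Spot
    exact Finset.sum_congr rfl (fun j _ => s_eq_sEuc P _)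
  rw [heq]
  apply continuous_finset_sum
  intro j _
  apply (P.smooth.continuous).comp
  refine (PiLp.continuous_toLp 2 _).comp (continuous_pi fun kk => ?_)
  change Continuous (fun x : EuclideanSpace ℝ (Tbox (n := n) p) => restr r (shift j (extendP p x + v0)) kk)
  have hcoord : (fun x : EuclideanSpace ℝ (Tbox (n := n) p) =>
      restr r (shift j (extendP p x + v0)) kk)
      = fun x => x ⟨reduce p (kk.1 + j), reduce_mem_Tbox hp _⟩ + v0 (kk.1 + j) := by
    funext x
    show extendP p x (kk.1 + j) + v0 (kk.1 + j) = _
    rw [extendP_apply hp]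
  rw [hcoord]
  exact (PiLp.continuous_apply 2 _ _).add continuous_const

/-- compactness of closed subsets of a box in euclidean space -/
lemma isCompact_box {ι : Type*} [Fintype ι] (a b : ℝ) (S : Set (EuclideanSpace ℝ ι))
    (hS : IsClosed S) (hsub : ∀ x ∈ S, ∀ i, a ≤ x i ∧ x i ≤ b) : IsCompact S := by
  apply Metric.isCompact_of_isClosed_isBounded hS
  rw [Metric.isBounded_iff_subset_closedBall 0]
  set C := max |a| |b| with hC
  refine ⟨Real.sqrt ((Fintype.card ι : ℝ) * C ^ 2), ?_⟩
  intro x hx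
  rw [Metric.mem_closedBall, dist_zero_right]
  rw [EuclideanSpace.norm_eq]
  apply Real.sqrt_le_sqrt
  calc ∑ i, ‖x i‖ ^ 2 ≤ ∑ _i : ι, C ^ 2 := by
        apply Finset.sum_le_sum
        intro i _
        have h1 := (hsub x hx i).1
        have h2 := (hsub x hx i).2
        have : |x i| ≤ C := by
          rw [abs_le]
          constructor
          · calc -(C) ≤ -|a| := by simp [hC]
              _ ≤ a := neg_abs_le a
              _ ≤ x i := h1
          · calc x i ≤ b := h2
              _ ≤ |b| := le_abs_self b
              _ ≤ C := le_max_right _ _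
        have hC0 : 0 ≤ C := le_trans (abs_nonneg a) (le_max_left _ _)
        calc ‖x i‖ ^ 2 = |x i| ^ 2 := by rw [Real.norm_eq_abs]
          _ ≤ C ^ 2 := sq_le_sq' (by linarith [abs_nonneg (x i)]) this
    _ = (Fintype.card ι : ℝ) * C ^ 2 := by
        simp [Finset.sum_const, nsmul_eq_mul, Finset.card_univ]

/-- boundedness of `s` on order intervals -/
lemma s_bound (P : Setup n r) (a b : ℝ) :
    ∃ B : ℝ, ∀ w : Zn n → ℝ, (∀ i, a ≤ w i ∧ w i ≤ b) → P.s w ≤ B := by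
  by_cases hab : a ≤ b
  · set K : Set (EuclideanSpace ℝ (ball r (0 : Zn n))) := {x | ∀ kk, a ≤ x kk ∧ x kk ≤ b}
      with hK
    have hKclosed : IsClosed K := by
      have : K = ⋂ kk, ((fun x : EuclideanSpace ℝ (ball r (0 : Zn n)) => x kk) ⁻¹'
          (Set.Icc a b)) := by
        ext x
        simp [hK, Set.mem_iInter, Set.mem_Icc]
      rw [this]
      exact isClosed_iInter (fun kk => IsClosed.preimage (PiLp.continuous_apply 2 _ kk) isClosed_Icc)
    have hKcomp : IsCompact K := isCompact_box a b K hKclosed (fun x hx i => hx i)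
    have hKne : K.Nonempty := ⟨WithLp.toLp 2 (fun _ => a), fun kk => ⟨le_refl a, hab⟩⟩
    obtain ⟨x0, hx0, hmax⟩ := hKcomp.exists_isMaxOn hKne
      ((P.smooth.continuous).continuousOn)
    refine ⟨sEuc r P.s x0, ?_⟩
    intro w hw
    rw [s_eq_sEuc P]
    exact hmax (fun kk => hw kk.1)
  · refine ⟨0, ?_⟩
    intro w hw
    exact absurd (le_trans (hw 0).1 (hw 0).2) hab

end Topo

/-- the mountain pass level satisfies `d_0^p > c_0^p`. -/
theorem statement4 {n r : ℕ} (P : Setup n r) (v0 w0 : Zn n → ℝ)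
    (hv0 : v0 ∈ M0 P.s) (hw0 : w0 ∈ M0 P.s) (hlt : ∀ i, v0 i < w0 i)
    (hadj : ∀ u ∈ M0 P.s, u ≠ v0 → u ≠ w0 → ¬(v0 ≤ u ∧ u ≤ w0))
    (p : Fin n → ℕ) (hp : ∀ m, 1 ≤ p m) :
    c0p P.s p < d0p P.s p v0 w0 := by
  classical
  have hr : 1 ≤ r := r_pos P
  obtain ⟨hv0per, hv0min⟩ := hv0
  obtain ⟨hw0per, hw0min⟩ := hw0
  have hva : ∀ i, v0 i = v0 0 := fun i => periodicAll_const hv0per i 0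
  have hwb : ∀ i, w0 i = w0 0 := fun i => periodicAll_const hw0per i 0
  have hab : v0 0 < w0 0 := hlt 0
  set wv : ℝ := w0 0 - v0 0 with hwv
  have hwvpos : 0 < wv := by rw [hwv]; linarith
  have hTne : (0 : Zn n) ∈ Tbox p := zero_mem_Tbox hp
  have hcard : 0 < (Tbox p).card := Finset.card_pos.mpr ⟨0, hTne⟩
  set N : ℝ := ((Tbox p).card : ℝ) with hNdef
  have hN : 0 < N := by rw [hNdef]; exact_mod_cast hcard
  set FF : EuclideanSpace ℝ (Tbox (n := n) p) → ℝ :=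
    fun x => I0p P.s p v0 (extendP p x) with hFF
  have hFFcont : Continuous FF := FF_cont P hp v0
  have hv0p : Periodic p v0 := periodicAll_periodic hv0per
  have hFFge : ∀ x, c0p P.s p ≤ FF x := fun x =>
    c0p_le P p (add_periodic (extendP_periodic hp x) hv0p)
  set z0 : {j // j ∈ Tbox p} := ⟨0, hTne⟩ with hz0
  set A : Set (EuclideanSpace ℝ (Tbox (n := n) p)) :=
    {x | (∀ jj, 0 ≤ x jj ∧ x jj ≤ wv) ∧ x z0 = wv / 2} with hA
  have hAne : A.Nonempty :=
    ⟨WithLp.toLp 2 (fun _ => wv / 2), ⟨fun jj => ⟨by linarith, by linarith⟩, rfl⟩⟩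
  have hAclosed : IsClosed A := by
    have h1 : A = (⋂ jj, ((fun x : EuclideanSpace ℝ (Tbox (n := n) p) => x jj) ⁻¹'
        Set.Icc 0 wv)) ∩ ((fun x : EuclideanSpace ℝ (Tbox (n := n) p) => x z0) ⁻¹'
        {wv / 2}) := by
      ext x
      simp only [hA, Set.mem_setOf_eq, Set.mem_inter_iff, Set.mem_iInter, Set.mem_preimage,
        Set.mem_Icc, Set.mem_singleton_iff]
    rw [h1]
    exact IsClosed.inter
      (isClosed_iInter fun jj => IsClosed.preimage (PiLp.continuous_apply 2 _ jj) isClosed_Icc)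
      (IsClosed.preimage (PiLp.continuous_apply 2 _ z0) isClosed_singleton)
  have hAcomp : IsCompact A := isCompact_box 0 wv A hAclosed (fun x hx => hx.1)
  obtain ⟨xs, hxsA, hxsmin⟩ := hAcomp.exists_isMinOn hAne hFFcont.continuousOn
  set δ : ℝ := FF xs - c0p P.s p with hδdef
  have hδpos : 0 < δ := by
    rcases lt_or_eq_of_le (hFFge xs) with hlt' | heq'
    · rw [hδdef]; linarith
    · exfalso
      set u : Zn n → ℝ := extendP p xs + v0 with hu
      have huper : Periodic p u := add_periodic (extendP_periodic hp xs) hv0p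
      have hFFu : FF xs = J0p P.s p u := rfl
      have humin : J0p P.s p u = c0p P.s p := by rw [← hFFu, ← heq']
      have hconst := minimizer_const P hr hp huper humin
      obtain ⟨hxsbd, hxsz⟩ := hxsA
      have hx0 : extendP p xs 0 = xs z0 := by
        rw [extendP_apply hp]
        exact congrArg xs (Subtype.ext reduce_zero)
      have hu0 : u 0 = wv / 2 + v0 0 := by
        show extendP p xs 0 + v0 0 = _
        rw [hx0, hxsz]
      have hshift_u : ∀ j, shift j u = u := fun j => funext fun i => hconst (i + j) i
      have hJu : J0p P.s p u = N * P.s u := by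
        unfold J0p Spot
        rw [Finset.sum_congr rfl (fun j _ => by rw [hshift_u j]), Finset.sum_const,
          nsmul_eq_mul]
      have hshift_v : ∀ j, shift j v0 = v0 := fun j => funext fun i => by
        show v0 (i + j) = v0 i
        rw [hva (i + j), hva i]
      have hJv : J0p P.s p v0 = N * P.s v0 := by
        unfold J0p Spot
        rw [Finset.sum_congr rfl (fun j _ => by rw [hshift_v j]), Finset.sum_const,
          nsmul_eq_mul]
      have hsv : P.s v0 = c0 P.s := by
        have h2 : J0 P.s v0 = P.s v0 := by unfold J0 Spot; rw [shift_zero]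
        rw [← h2, hv0min]
      have h1 : N * P.s u ≤ N * c0 P.s := by
        calc N * P.s u = c0p P.s p := by rw [← hJu, humin]
          _ ≤ J0p P.s p v0 := c0p_le P p hv0p
          _ = N * c0 P.s := by rw [hJv, hsv]
      have hsu_le : P.s u ≤ c0 P.s := le_of_mul_le_mul_left h1 hN
      have hPAu : PeriodicAll u := fun i m => hconst _ _
      have hJu0 : J0 P.s u = P.s u := by unfold J0 Spot; rw [shift_zero]
      have hsu_ge : c0 P.s ≤ P.s u := by rw [← hJu0]; exact c0_le P hPAu
      have hMu : u ∈ M0 P.s := ⟨hPAu, by rw [hJu0]; linarith⟩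
      have hune_v : u ≠ v0 := by
        intro hcon
        have := congrFun hcon 0
        rw [hu0] at this
        rw [hwv] at this
        linarith
      have hune_w : u ≠ w0 := by
        intro hcon
        have := congrFun hcon 0
        rw [hu0] at this
        rw [hwv] at this
        linarith
      apply hadj u hMu hune_v hune_w
      constructor
      · intro i
        rw [hva i]
        have h3 : u i = u 0 := hconst i 0
        rw [h3, hu0]
        linarith
      · intro i
        rw [hwb i]
        have h3 : u i = u 0 := hconst i 0
        rw [h3, hu0, hwv]
        linarith
  obtain ⟨B, hB⟩ := s_bound P (v0 0) (w0 0)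
  have hlow : ∀ y ∈ {y | ∃ h, PathIn p v0 w0 h ∧
      y = sSup ((fun θ => I0p P.s p v0 (h θ)) '' Set.Icc 0 1)}, c0p P.s p + δ ≤ y := by
    rintro y ⟨h, ⟨hcont, hG, h0, h1⟩, rfl⟩
    have hf : ContinuousOn (fun θ => toEuc p (h θ) z0) (Set.Icc 0 1) :=
      (PiLp.continuous_apply 2 _ z0).comp_continuousOn hcont
    have hf0 : toEuc p (h 0) z0 = 0 := by rw [h0]; rfl
    have hf1 : toEuc p (h 1) z0 = wv := by rw [h1]; rfl
    have hmem : wv / 2 ∈ Set.Icc (toEuc p (h 0) z0) (toEuc p (h 1) z0) := by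
      rw [hf0, hf1]
      exact ⟨by linarith, by linarith⟩
    obtain ⟨θs, hθs, hθval⟩ := intermediate_value_Icc (by norm_num : (0:ℝ) ≤ 1) hf hmem
    obtain ⟨hper', hge0, hlew⟩ := hG θs hθs
    have hmemA : toEuc p (h θs) ∈ A := by
      constructor
      · intro jj
        refine ⟨hge0 jj.1, ?_⟩
        calc toEuc p (h θs) jj = h θs jj.1 := rfl
          _ ≤ (w0 - v0) jj.1 := hlew jj.1
          _ = wv := by
            show w0 jj.1 - v0 jj.1 = wv
            rw [hva jj.1, hwb jj.1]
      · exact hθval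
    have hkey : c0p P.s p + δ ≤ I0p P.s p v0 (h θs) := by
      have h2 : FF (toEuc p (h θs)) = I0p P.s p v0 (h θs) := by
        show I0p P.s p v0 (extendP p (toEuc p (h θs))) = _
        rw [extendP_toEuc hp hper']
      have h3 : FF xs ≤ FF (toEuc p (h θs)) := hxsmin hmemA
      rw [h2] at h3
      rw [hδdef]
      linarith
    have hbdd : BddAbove ((fun θ => I0p P.s p v0 (h θ)) '' Set.Icc 0 1) := by
      refine ⟨N * B, ?_⟩
      rintro z ⟨θ, hθ, rfl⟩
      obtain ⟨hper2, hge2, hle2⟩ := hG θ hθ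
      have hval : ∀ i, v0 0 ≤ (h θ + v0) i ∧ (h θ + v0) i ≤ w0 0 := by
        intro i
        have l0 := hge2 i
        have l1 := hle2 i
        have l2 : (w0 - v0) i = wv := by
          show w0 i - v0 i = wv
          rw [hva i, hwb i]
        rw [l2] at l1
        have l3 : v0 i = v0 0 := hva i
        constructor
        · show v0 0 ≤ h θ i + v0 i
          rw [l3]
          have : (0 : Zn n → ℝ) i = 0 := rfl
          rw [this] at l0
          linarith
        · show h θ i + v0 i ≤ w0 0
          rw [l3, hwv] at *
          linarith
      calc I0p P.s p v0 (h θ) = ∑ j ∈ Tbox p, P.s (shift j (h θ + v0)) := rfl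
        _ ≤ ∑ _j ∈ Tbox p, B :=
            Finset.sum_le_sum (fun j _ => hB _ (fun i => hval (i + j)))
        _ = N * B := by rw [Finset.sum_const, nsmul_eq_mul]
    calc c0p P.s p + δ ≤ I0p P.s p v0 (h θs) := hkey
      _ ≤ sSup ((fun θ => I0p P.s p v0 (h θ)) '' Set.Icc 0 1) :=
          le_csSup hbdd ⟨θs, hθs, rfl⟩
  have hSne : Set.Nonempty {y | ∃ h, PathIn p v0 w0 h ∧
      y = sSup ((fun θ => I0p P.s p v0 (h θ)) '' Set.Icc 0 1)} := by
    set hlin : ℝ → Zn n → ℝ := fun θ => fun _ => θ * wv with hhlin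
    refine ⟨sSup ((fun θ => I0p P.s p v0 (hlin θ)) '' Set.Icc 0 1), hlin, ?_, rfl⟩
    refine ⟨?_, ?_, ?_, ?_⟩
    · have : Continuous (fun θ : ℝ => toEuc p (hlin θ)) := by
        refine (PiLp.continuous_toLp 2 _).comp (continuous_pi fun jj => ?_)
        show Continuous fun θ : ℝ => θ * wv
        exact continuous_id.mul continuous_const
      exact this.continuousOn
    · intro θ hθ
      refine ⟨fun i m => rfl, fun i => mul_nonneg hθ.1 (le_of_lt hwvpos), fun i => ?_⟩
      show θ * wv ≤ (w0 - v0) i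
      have l2 : (w0 - v0) i = wv := by
        show w0 i - v0 i = wv
        rw [hva i, hwb i]
      rw [l2]
      calc θ * wv ≤ 1 * wv := mul_le_mul_of_nonneg_right hθ.2 (le_of_lt hwvpos)
        _ = wv := one_mul wv
    · funext i
      show (0 : ℝ) * wv = 0
      rw [zero_mul]
    · funext i
      show (1 : ℝ) * wv = (w0 - v0) i
      rw [one_mul]
      show wv = w0 i - v0 i
      rw [hva i, hwb i]
  have hfinal : c0p P.s p + δ ≤ d0p P.s p v0 w0 := le_csInf hSne hlow
  linarith

end

end FK
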